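/- Let Lx, Ly, m and N be positive integers with m ≤ min(Lx, Ly) − 1 and 2 ≤ N ≤ Lx·Ly. If N sites of the Lx × Ly lattice are occupied uniformly at random (averaging over all N-element subsets of the Lx·Ly sites), then the expected number of unordered pairs of occupied sites at uniform (Chebyshev) distance exactly m equals (N/(Lx·Ly))·((N−1)/(Lx·Ly − 1))·(4mLxLy − 3(Lx + Ly)m² + 2m³). -/

import Mathlib

/-- The site set of the `Lx × Ly` square lattice. -/
def latticeSites (Lx Ly : ℕ) : Finset (ℕ × ℕ) :=
  Finset.range Lx ×ˢ Finset.range Ly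

/-- The (non-periodic) uniform (Chebyshev) distance between two lattice sites. -/
def uniformDist (a b : ℕ × ℕ) : ℕ :=
  max (Nat.dist a.1 b.1) (Nat.dist a.2 b.2)

/-- The number of unordered pairs of occupied sites (of a configuration `M`) at uniform
distance exactly `m`. -/
def pairCount (m : ℕ) (M : Finset (ℕ × ℕ)) : ℕ :=
  ((M.powersetCard 2).filter
    (fun p => ∃ a ∈ p, ∃ b ∈ p, a ≠ b ∧ uniformDist a b = m)).card

namespace ExpectedPCF

open Finset

lemma interval_filter (x k L : ℕ) :
    ((range L).filter (fun y => Nat.dist x y ≤ k)) = Finset.Ico (x - k) (min (x + k + 1) L) := by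
  ext y
  simp only [Finset.mem_filter, mem_range, Finset.mem_Ico, lt_min_iff]
  unfold Nat.dist
  omega

lemma sum_k_sub (k L : ℕ) (hk : k ≤ L) :
    (∑ x ∈ range L, (k - x)) * 2 = k * (k + 1) := by
  have h1 : (∑ x ∈ range L, (k - x)) = ∑ x ∈ range k, (k - x) := by
    refine (Finset.sum_subset (range_subset_range.2 hk) ?_).symm
    intro x hx hx'
    simp only [mem_range] at hx hx'
    omega
  have h2 : ∑ x ∈ range k, (k - (k - 1 - x)) = ∑ x ∈ range k, (k - x) :=
    Finset.sum_range_reflect (fun x => k - x) k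
  have h3 : ∑ x ∈ range k, (k - (k - 1 - x)) = ∑ x ∈ range k, (x + 1) := by
    refine Finset.sum_congr rfl ?_
    intro x hx
    simp only [mem_range] at hx
    omega
  rw [h1, ← h2, h3, Finset.sum_add_distrib, add_mul, Finset.sum_range_id_mul_two]
  simp only [Finset.sum_const, card_range, smul_eq_mul, mul_one]
  cases k with
  | zero => simp
  | succ n => simp [Nat.succ_sub_one]; ring

lemma oneD (k L : ℕ) (hk : k ≤ L) :
    ((range L ×ˢ range L).filter (fun p => Nat.dist p.1 p.2 ≤ k)).card + k * (k + 1)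
      = (2 * k + 1) * L := by
  rw [Finset.card_filter, Finset.sum_product]
  have h1 : ∀ x ∈ range L,
      (∑ y ∈ range L, if Nat.dist x y ≤ k then 1 else 0)
        = min (x + k + 1) L - (x - k) := by
    intro x _
    rw [← Finset.card_filter, interval_filter, Nat.card_Ico]
  rw [Finset.sum_congr rfl h1]
  have h2 : ∀ x ∈ range L,
      (min (x + k + 1) L - (x - k)) + ((k - x) + (x + k + 1 - L)) = 2 * k + 1 := by
    intro x hx
    simp only [mem_range] at hx
    omega
  have h3 : (∑ x ∈ range L, (min (x + k + 1) L - (x - k)))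
      + (∑ x ∈ range L, ((k - x) + (x + k + 1 - L))) = (2 * k + 1) * L := by
    rw [← Finset.sum_add_distrib, Finset.sum_congr rfl h2]
    simp [mul_comm]
  have h4 : (∑ x ∈ range L, ((k - x) + (x + k + 1 - L))) = k * (k + 1) := by
    rw [Finset.sum_add_distrib]
    have h5 : ∑ x ∈ range L, ((L - 1 - x) + k + 1 - L) = ∑ x ∈ range L, (x + k + 1 - L) :=
      Finset.sum_range_reflect (fun x => x + k + 1 - L) L
    have h6 : ∑ x ∈ range L, ((L - 1 - x) + k + 1 - L) = ∑ x ∈ range L, (k - x) := by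
      refine Finset.sum_congr rfl ?_
      intro x hx
      simp only [mem_range] at hx
      omega
    rw [← h5, h6, ← two_mul, mul_comm, ← sum_k_sub k L hk, mul_comm]
  omega

lemma twoD (k Lx Ly : ℕ) :
    (((range Lx ×ˢ range Ly) ×ˢ (range Lx ×ˢ range Ly)).filter
        (fun q => uniformDist q.1 q.2 ≤ k)).card
      = ((range Lx ×ˢ range Lx).filter (fun p => Nat.dist p.1 p.2 ≤ k)).card
        * ((range Ly ×ˢ range Ly).filter (fun p => Nat.dist p.1 p.2 ≤ k)).card := by
  rw [← Finset.card_product]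
  apply Finset.card_nbij' (fun q => ((q.1.1, q.2.1), (q.1.2, q.2.2)))
    (fun q => ((q.1.1, q.2.1), (q.1.2, q.2.2)))
  · intro q hq
    simp only [mem_filter, Finset.mem_product, mem_coe, Set.mem_setOf_eq, uniformDist,
      max_le_iff] at hq ⊢
    tauto
  · intro q hq
    simp only [mem_filter, Finset.mem_product, mem_coe, Set.mem_setOf_eq, uniformDist,
      max_le_iff] at hq ⊢
    tauto
  · intro q _; rfl
  · intro q _; rfl

lemma uniformDist_comm (a b : ℕ × ℕ) : uniformDist a b = uniformDist b a := by
  simp [uniformDist, Nat.dist_comm]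

lemma uniformDist_pos_ne {a b : ℕ × ℕ} {m : ℕ} (hm : 0 < m) (h : uniformDist a b = m) :
    a ≠ b := by
  rintro rfl
  simp [uniformDist, Nat.dist_self] at h
  omega

lemma split_card (S : Finset (ℕ × ℕ)) (k : ℕ) :
    ((S ×ˢ S).filter (fun q => uniformDist q.1 q.2 = k + 1)).card
      + ((S ×ˢ S).filter (fun q => uniformDist q.1 q.2 ≤ k)).card
      = ((S ×ˢ S).filter (fun q => uniformDist q.1 q.2 ≤ k + 1)).card := by
  rw [← Finset.card_union_of_disjoint, ← Finset.filter_or]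
  · congr 1
    apply Finset.filter_congr
    intro q _
    constructor
    · rintro (h | h) <;> omega
    · intro h; omega
  · rw [Finset.disjoint_filter]
    intro q _ h
    omega

lemma two_to_one (S : Finset (ℕ × ℕ)) (m : ℕ) (hm : 0 < m) :
    ((S ×ˢ S).filter (fun q => uniformDist q.1 q.2 = m)).card
      = 2 * ((S.powersetCard 2).filter
          (fun p => ∃ a ∈ p, ∃ b ∈ p, a ≠ b ∧ uniformDist a b = m)).card := by
  rw [Finset.card_eq_sum_card_fiberwise
    (f := fun q => ({q.1, q.2} : Finset (ℕ × ℕ)))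
    (t := (S.powersetCard 2).filter
      (fun p => ∃ a ∈ p, ∃ b ∈ p, a ≠ b ∧ uniformDist a b = m))]
  · rw [Finset.sum_congr rfl (g := fun _ => 2), Finset.sum_const, smul_eq_mul, mul_comm]
    intro p hp
    simp only [mem_filter, Finset.mem_powersetCard] at hp
    obtain ⟨⟨hpS, hp2⟩, hQ⟩ := hp
    obtain ⟨a, b, hab, rfl⟩ := Finset.card_eq_two.mp hp2
    obtain ⟨c, hc, d, hd, hcd, hdist⟩ := hQ
    have hdab : uniformDist a b = m := by
      simp only [Finset.mem_insert, Finset.mem_singleton] at hc hd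
      rcases hc with rfl | rfl <;> rcases hd with rfl | rfl <;>
        first | exact hdist | exact (hcd rfl).elim | rw [uniformDist_comm]; exact hdist
    have haS : a ∈ S := hpS (by simp)
    have hbS : b ∈ S := hpS (by simp)
    have : ((S ×ˢ S).filter (fun q => uniformDist q.1 q.2 = m)).filter
        (fun q => ({q.1, q.2} : Finset (ℕ × ℕ)) = {a, b}) = {(a, b), (b, a)} := by
      ext q
      simp only [Finset.mem_filter, Finset.mem_product, Finset.mem_insert,
        Finset.mem_singleton]
      constructor
      · rintro ⟨⟨⟨h1, h2⟩, h3⟩, h4⟩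
        have hne : q.1 ≠ q.2 := uniformDist_pos_ne hm h3
        have e1 : q.1 ∈ ({a, b} : Finset (ℕ × ℕ)) := by rw [← h4]; simp
        have e2 : q.2 ∈ ({a, b} : Finset (ℕ × ℕ)) := by rw [← h4]; simp
        simp only [Finset.mem_insert, Finset.mem_singleton] at e1 e2
        rcases e1 with e1 | e1 <;> rcases e2 with e2 | e2
        · exact absurd (e1.trans e2.symm) hne
        · left; exact Prod.ext e1 e2
        · right; exact Prod.ext e1 e2
        · exact absurd (e1.trans e2.symm) hne
      · rintro (rfl | rfl)
        · exact ⟨⟨⟨haS, hbS⟩, hdab⟩, rfl⟩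
        · refine ⟨⟨⟨hbS, haS⟩, by rw [uniformDist_comm] at hdab; exact hdab⟩, ?_⟩
          simp [Finset.pair_comm]
    rw [this]
    rw [Finset.card_insert_of_notMem, Finset.card_singleton]
    simp only [Finset.mem_singleton]
    intro h
    exact hab (congrArg Prod.fst h)
  · intro q hq
    simp only [mem_coe, mem_filter, Finset.mem_product] at hq
    obtain ⟨⟨h1, h2⟩, h3⟩ := hq
    have hne : q.1 ≠ q.2 := uniformDist_pos_ne hm h3
    simp only [mem_coe, mem_filter, Finset.mem_powersetCard]
    refine ⟨⟨?_, Finset.card_pair hne⟩, q.1, by simp, q.2, by simp, hne, h3⟩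
    intro x hx
    simp only [Finset.mem_insert, Finset.mem_singleton] at hx
    rcases hx with rfl | rfl <;> assumption

lemma fiber_count {α : Type*} [DecidableEq α] (S p : Finset α) (N : ℕ)
    (hp : p ⊆ S) (hN : p.card ≤ N) :
    ((S.powersetCard N).filter (fun M => p ⊆ M)).card
      = (S.card - p.card).choose (N - p.card) := by
  rw [← Finset.card_sdiff_of_subset hp, ← Finset.card_powersetCard]
  apply Finset.card_nbij' (fun M => M \ p) (fun A => A ∪ p)
  · intro M hM
    simp only [mem_coe, mem_filter, Finset.mem_powersetCard] at hM ⊢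
    obtain ⟨⟨hMS, hMc⟩, hpM⟩ := hM
    refine ⟨fun x hx => ?_, ?_⟩
    · simp only [Finset.mem_sdiff] at hx ⊢
      exact ⟨hMS hx.1, hx.2⟩
    · rw [Finset.card_sdiff_of_subset hpM, hMc]
  · intro A hA
    simp only [mem_coe, mem_filter, Finset.mem_powersetCard] at hA ⊢
    obtain ⟨hAS, hAc⟩ := hA
    have hdisj : Disjoint A p := by
      rw [Finset.disjoint_left]
      intro x hx
      exact (Finset.mem_sdiff.mp (hAS hx)).2
    refine ⟨⟨?_, ?_⟩, Finset.subset_union_right⟩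
    · intro x hx
      rcases Finset.mem_union.mp hx with h | h
      · exact (Finset.mem_sdiff.mp (hAS h)).1
      · exact hp h
    · rw [Finset.card_union_of_disjoint hdisj, hAc]
      omega
  · intro M hM
    simp only [mem_coe, mem_filter, Finset.mem_powersetCard] at hM
    exact Finset.sdiff_union_of_subset hM.2
  · intro A hA
    simp only [mem_coe, Finset.mem_powersetCard] at hA
    apply Finset.union_sdiff_cancel_right
    rw [Finset.disjoint_left]
    intro x hx
    exact (Finset.mem_sdiff.mp (hA.1 hx)).2

lemma choose_ratio (n N : ℕ) (hN : 2 ≤ N) (hn : N ≤ n) :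
    n.choose N * N * (N - 1) = (n - 2).choose (N - 2) * n * (n - 1) := by
  obtain ⟨N', rfl⟩ : ∃ N', N = N' + 2 := ⟨N - 2, by omega⟩
  obtain ⟨n', rfl⟩ : ∃ n', n = n' + 2 := ⟨n - 2, by omega⟩
  simp only [Nat.add_sub_cancel]
  have h1 := Nat.add_one_mul_choose_eq (n' + 1) (N' + 1)
  have h2 := Nat.add_one_mul_choose_eq n' N'
  have e1 : N' + 2 - 1 = N' + 1 := rfl
  have e2 : n' + 2 - 1 = n' + 1 := rfl
  rw [e1, e2]
  calc (n' + 2).choose (N' + 2) * (N' + 2) * (N' + 1)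
      = ((n' + 1 + 1) * (n' + 1).choose (N' + 1)) * (N' + 1) := by rw [h1]
    _ = (n' + 2) * ((n' + 1).choose (N' + 1) * (N' + 1)) := by ring
    _ = (n' + 2) * ((n' + 1) * n'.choose N') := by rw [← h2]
    _ = n'.choose N' * (n' + 2) * (n' + 1) := by ring

end ExpectedPCF

set_option maxHeartbeats 1000000 in
open Finset ExpectedPCF in
/-- If `N` sites of the `Lx × Ly` lattice are occupied uniformly at random, the expected
number of unordered pairs of occupied sites at uniform (Chebyshev) distance exactly `m`
is `(N/(Lx Ly)) ((N−1)/(Lx Ly − 1)) (4 m Lx Ly − 3 (Lx + Ly) m² + 2 m³)`. -/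
theorem expected_nonperiodic_uniform_pair_count (Lx Ly m N : ℕ)
    (hLx : 0 < Lx) (hLy : 0 < Ly) (hm : 0 < m) (hmle : m ≤ min Lx Ly - 1)
    (hN : 2 ≤ N) (hNle : N ≤ Lx * Ly) :
    (∑ M ∈ (latticeSites Lx Ly).powersetCard N, (pairCount m M : ℚ))
        / ((Lx * Ly).choose N)
      = ((N : ℚ) / ((Lx : ℚ) * (Ly : ℚ))) * (((N : ℚ) - 1) / ((Lx : ℚ) * (Ly : ℚ) - 1)) *
        (4 * m * Lx * Ly - 3 * (Lx + Ly) * (m : ℚ) ^ 2 + 2 * (m : ℚ) ^ 3) := by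
  set S := latticeSites Lx Ly with hS
  have hScard : S.card = Lx * Ly := by
    simp [hS, latticeSites, Finset.card_product]
  set P2 := (S.powersetCard 2).filter
    (fun p => ∃ a ∈ p, ∃ b ∈ p, a ≠ b ∧ uniformDist a b = m) with hP2def
  -- Step 1: rewrite pairCount
  have step1 : ∀ M ∈ S.powersetCard N, pairCount m M = (P2.filter (fun p => p ⊆ M)).card := by
    intro M hM
    rw [Finset.mem_powersetCard] at hM
    unfold pairCount
    congr 1
    ext p
    simp only [hP2def, Finset.mem_filter, Finset.mem_powersetCard]
    constructor
    · rintro ⟨⟨h1, h2⟩, h3⟩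
      exact ⟨⟨⟨h1.trans hM.1, h2⟩, h3⟩, h1⟩
    · rintro ⟨⟨⟨_, h2⟩, h3⟩, h4⟩
      exact ⟨⟨h4, h2⟩, h3⟩
  -- Step 2: double counting
  have step2 : ∑ M ∈ S.powersetCard N, pairCount m M
      = P2.card * (Lx * Ly - 2).choose (N - 2) := by
    calc ∑ M ∈ S.powersetCard N, pairCount m M
        = ∑ M ∈ S.powersetCard N, (P2.filter (fun p => p ⊆ M)).card :=
          Finset.sum_congr rfl step1
      _ = ∑ M ∈ S.powersetCard N, ∑ p ∈ P2, if p ⊆ M then 1 else 0 := by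
          refine Finset.sum_congr rfl fun M _ => ?_
          rw [Finset.card_filter]
      _ = ∑ p ∈ P2, ∑ M ∈ S.powersetCard N, if p ⊆ M then 1 else 0 := Finset.sum_comm
      _ = ∑ p ∈ P2, ((S.powersetCard N).filter (fun M => p ⊆ M)).card := by
          refine Finset.sum_congr rfl fun p _ => ?_
          rw [Finset.card_filter]
      _ = ∑ p ∈ P2, (Lx * Ly - 2).choose (N - 2) := by
          refine Finset.sum_congr rfl fun p hp => ?_
          have hmem := (Finset.mem_filter.mp hp).1
          rw [Finset.mem_powersetCard] at hmem
          have h := fiber_count S p N hmem.1 (by rw [hmem.2]; exact hN)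
          rw [hmem.2, hScard] at h
          exact h
      _ = P2.card * (Lx * Ly - 2).choose (N - 2) := by
          rw [Finset.sum_const, smul_eq_mul]
  -- Step 3: count P2 in ℚ
  obtain ⟨k, rfl⟩ : ∃ k, m = k + 1 := ⟨m - 1, by omega⟩
  have hkx : k + 1 ≤ Lx := by omega
  have hky : k + 1 ≤ Ly := by omega
  have hP2 : (P2.card : ℚ)
      = 4 * (k + 1) * Lx * Ly - 3 * ((Lx : ℚ) + Ly) * ((k : ℚ) + 1) ^ 2
        + 2 * ((k : ℚ) + 1) ^ 3 := by
    have hsplit := split_card S k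
    have h221 := two_to_one S (k + 1) (Nat.succ_pos k)
    have htwoD1 : ((S ×ˢ S).filter (fun q => uniformDist q.1 q.2 ≤ k + 1)).card
        = ((range Lx ×ˢ range Lx).filter (fun p => Nat.dist p.1 p.2 ≤ k + 1)).card
          * ((range Ly ×ˢ range Ly).filter (fun p => Nat.dist p.1 p.2 ≤ k + 1)).card :=
      twoD (k + 1) Lx Ly
    have htwoD0 : ((S ×ˢ S).filter (fun q => uniformDist q.1 q.2 ≤ k)).card
        = ((range Lx ×ˢ range Lx).filter (fun p => Nat.dist p.1 p.2 ≤ k)).card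
          * ((range Ly ×ˢ range Ly).filter (fun p => Nat.dist p.1 p.2 ≤ k)).card :=
      twoD k Lx Ly
    have hx1 := oneD (k + 1) Lx hkx
    have hy1 := oneD (k + 1) Ly hky
    have hx0 := oneD k Lx (by omega)
    have hy0 := oneD k Ly (by omega)
    rw [h221, htwoD0, htwoD1] at hsplit
    -- cast everything to ℚ
    set a1 := ((range Lx ×ˢ range Lx).filter (fun p => Nat.dist p.1 p.2 ≤ k + 1)).card
    set b1 := ((range Ly ×ˢ range Ly).filter (fun p => Nat.dist p.1 p.2 ≤ k + 1)).card
    set a0 := ((range Lx ×ˢ range Lx).filter (fun p => Nat.dist p.1 p.2 ≤ k)).card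
    set b0 := ((range Ly ×ˢ range Ly).filter (fun p => Nat.dist p.1 p.2 ≤ k)).card
    have qsplit : (2 : ℚ) * P2.card + (a0 : ℚ) * b0 = (a1 : ℚ) * b1 := by
      exact_mod_cast congrArg (fun t : ℕ => (t : ℚ)) hsplit
    have qx1 : (a1 : ℚ) = (2 * (k + 1) + 1) * Lx - (k + 1) * (k + 2) := by
      have := congrArg (fun t : ℕ => (t : ℚ)) hx1
      push_cast at this
      linarith
    have qy1 : (b1 : ℚ) = (2 * (k + 1) + 1) * Ly - (k + 1) * (k + 2) := by
      have := congrArg (fun t : ℕ => (t : ℚ)) hy1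
      push_cast at this
      linarith
    have qx0 : (a0 : ℚ) = (2 * k + 1) * Lx - k * (k + 1) := by
      have := congrArg (fun t : ℕ => (t : ℚ)) hx0
      push_cast at this
      linarith
    have qy0 : (b0 : ℚ) = (2 * k + 1) * Ly - k * (k + 1) := by
      have := congrArg (fun t : ℕ => (t : ℚ)) hy0
      push_cast at this
      linarith
    rw [qx1, qy1, qx0, qy0] at qsplit
    linear_combination qsplit / 2
  -- Assemble
  have hn2 : 2 ≤ Lx * Ly := le_trans hN hNle
  have hCpos : 0 < (Lx * Ly).choose N := Nat.choose_pos hNle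
  have hCR := choose_ratio (Lx * Ly) N hN hNle
  have qCR : ((Lx * Ly).choose N : ℚ) * N * ((N : ℚ) - 1)
      = ((Lx * Ly - 2).choose (N - 2) : ℚ) * (Lx * Ly) * ((Lx : ℚ) * Ly - 1) := by
    have := congrArg (fun t : ℕ => (t : ℚ)) hCR
    push_cast [Nat.cast_sub (by omega : 1 ≤ N), Nat.cast_sub (by omega : 1 ≤ Lx * Ly)] at this
    linarith
  have hsumQ : (∑ M ∈ S.powersetCard N, (pairCount (k + 1) M : ℚ))
      = (P2.card : ℚ) * ((Lx * Ly - 2).choose (N - 2) : ℚ) := by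
    rw [← Nat.cast_sum]
    exact_mod_cast congrArg (fun t : ℕ => (t : ℚ)) step2
  have hC0 : ((Lx * Ly).choose N : ℚ) ≠ 0 := by positivity
  have huv : ((Lx : ℚ) * Ly) ≠ 0 := by positivity
  have huv1 : ((Lx : ℚ) * Ly - 1) ≠ 0 := by
    have : (2 : ℚ) ≤ (Lx : ℚ) * Ly := by exact_mod_cast hn2
    linarith
  rw [hsumQ, hP2]
  rw [div_mul_div_comm, div_mul_eq_mul_div, div_eq_div_iff hC0 (mul_ne_zero huv huv1)]
  push_cast
  linear_combination (-(4 * ((k:ℚ) + 1) * Lx * Ly - 3 * ((Lx : ℚ) + Ly) * ((k : ℚ) + 1) ^ 2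
    + 2 * ((k : ℚ) + 1) ^ 3)) * qCR
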